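/- Let n > 1 be an integer and regard the adjacency matrix of the Möbius ladder M_{2n} as a real matrix. Then for every real number x, det(x · I_{2n} - A(M_{2n})) = ∏_{j=1}^{2n} (x - ((-1)^j + 2 cos(j π / n))). -/

import Mathlib

open SimpleGraph Matrix Real Finset

/-- The Möbius ladder on `2 * n` vertices: vertices `i` and `j` in `ZMod (2 * n)` are
adjacent if and only if `i - j ≡ 1, -1` or `n (mod 2 * n)`. -/
def mobiusLadder (n : ℕ) : SimpleGraph (ZMod (2 * n)) :=
  SimpleGraph.fromRel (fun i j => i - j = 1 ∨ i - j = (n : ZMod (2 * n)))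

lemma pow_mod_eq {ζ : ℂ} {N : ℕ} (hζ : ζ ^ N = 1) (m : ℕ) :
    ζ ^ (m % N) = ζ ^ m := by
  conv_rhs => rw [← Nat.div_add_mod m N]
  rw [pow_add, pow_mul, hζ, one_pow, one_mul]

lemma adj_iff (n : ℕ) (hn : 1 < n) (i j : ZMod (2 * n)) :
    (mobiusLadder n).Adj i j ↔ (j = i - 1 ∨ j = i + 1 ∨ j = i + n) := by
  haveI : NeZero (2 * n) := ⟨by omega⟩
  have hdvd : ∀ m : ℕ, 0 < m → m < 2 * n → (m : ZMod (2 * n)) ≠ 0 := fun m hm1 hm2 h =>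
    absurd (Nat.le_of_dvd hm1 ((ZMod.natCast_eq_zero_iff _ _).mp h)) (by omega)
  have h2n : -(n : ZMod (2 * n)) = n := neg_eq_of_add_eq_zero_left (by
    rw [← Nat.cast_add, show n + n = 2 * n by ring, ZMod.natCast_self])
  rw [mobiusLadder, SimpleGraph.fromRel_adj]
  constructor
  · rintro ⟨hne, (h | h) | (h | h)⟩
    · exact Or.inl (by linear_combination -h)
    · exact Or.inr (Or.inr (by linear_combination -h + h2n))
    · exact Or.inr (Or.inl (by linear_combination h))
    · exact Or.inr (Or.inr (by linear_combination h))
  · rintro (rfl | rfl | rfl)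
    · constructor
      · intro h
        exact hdvd 1 one_pos (by omega) (by push_cast; linear_combination h)
      · exact Or.inl (Or.inl (by ring))
    · constructor
      · intro h
        exact hdvd 1 one_pos (by omega) (by push_cast; linear_combination -h)
      · exact Or.inr (Or.inl (by ring))
    · constructor
      · intro h
        exact hdvd n (by omega) (by omega) (by linear_combination -h)
      · exact Or.inr (Or.inr (by ring))

lemma adjM (n : ℕ) (hn : 1 < n) [DecidableRel (mobiusLadder n).Adj] (i k : ZMod (2 * n)) :
    (mobiusLadder n).adjMatrix ℂ i k =
      (if k = i - 1 then 1 else 0) + (if k = i + 1 then 1 else 0)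
        + (if k = i + (n : ZMod (2 * n)) then 1 else 0) := by
  haveI : NeZero (2 * n) := ⟨by omega⟩
  have hdvd : ∀ m : ℕ, 0 < m → m < 2 * n → (m : ZMod (2 * n)) ≠ 0 := fun m hm1 hm2 h =>
    absurd (Nat.le_of_dvd hm1 ((ZMod.natCast_eq_zero_iff _ _).mp h)) (by omega)
  have d12 : i - 1 ≠ i + 1 := fun h =>
    hdvd 2 (by omega) (by omega) (by push_cast; linear_combination -h)
  have d13 : i - 1 ≠ i + n := fun h =>
    hdvd (n + 1) (by omega) (by omega) (by push_cast; linear_combination -h)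
  have d23 : i + 1 ≠ i + n := fun h =>
    hdvd (n - 1) (by omega) (by omega)
      (by rw [Nat.cast_sub (by omega), Nat.cast_one]; linear_combination -h)
  rw [SimpleGraph.adjMatrix_apply]
  by_cases h1 : k = i - 1 <;> by_cases h2 : k = i + 1 <;> by_cases h3 : k = i + (n : ZMod (2*n)) <;>
    simp_all [adj_iff n hn]

open scoped Classical in
theorem charpoly_mobiusLadder (n : ℕ) (hn : 1 < n) (x : ℝ) :
    haveI : NeZero (2 * n) := ⟨by omega⟩
    (x • (1 : Matrix (ZMod (2 * n)) (ZMod (2 * n)) ℝ) - (mobiusLadder n).adjMatrix ℝ).det =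
      ∏ j ∈ Finset.Icc 1 (2 * n), (x - ((-1 : ℝ) ^ j + 2 * Real.cos (j * π / n))) := by
  haveI : NeZero (2 * n) := ⟨by omega⟩
  set N := 2 * n with hNdef
  set ζ : ℂ := Complex.exp (2 * ↑π * Complex.I / N) with hζdef
  have hprim : IsPrimitiveRoot ζ N := Complex.isPrimitiveRoot_exp N (by omega)
  have hζN : ζ ^ N = 1 := hprim.pow_eq_one
  set f : ZMod N → ℂ := fun a => ζ ^ a.val with hfdef
  have fadd : ∀ a b : ZMod N, f (a + b) = f a * f b := by
    intro a b
    show ζ ^ (a + b).val = _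
    rw [ZMod.val_add, pow_mod_eq hζN, pow_add]
  have f0 : f 0 = 1 := by simp [hfdef]
  set F : Matrix (ZMod N) (ZMod N) ℂ := Matrix.of (fun i j => f (i * j)) with hFdef
  set d : ZMod N → ℂ := fun j => (x : ℂ) - (f j + f (-j) + f ((n : ZMod N) * j)) with hddef
  set A := (mobiusLadder n).adjMatrix ℂ with hAdef
  set M := (x : ℂ) • (1 : Matrix (ZMod N) (ZMod N) ℂ) - A with hMdef
  have hMF : M * F = F * Matrix.diagonal d := by
    ext i j
    rw [Matrix.mul_apply, Matrix.mul_diagonal]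
    have hA : ∀ k, M i k = (x : ℂ) * (if i = k then 1 else 0)
        - ((if k = i - 1 then 1 else 0) + (if k = i + 1 then 1 else 0)
          + (if k = i + (n : ZMod N) then 1 else 0)) := by
      intro k
      rw [hMdef, Matrix.sub_apply, Matrix.smul_apply, Matrix.one_apply, hAdef, adjM n hn i k,
        smul_eq_mul]
    have expand : ∑ k, M i k * F k j
        = (x : ℂ) * F i j - (F (i - 1) j + F (i + 1) j + F (i + (n : ZMod N)) j) := by
      have hterm : ∀ k, M i k * F k j
          = (if i = k then (x : ℂ) * F k j else 0)
            - ((if k = i - 1 then F k j else 0) + (if k = i + 1 then F k j else 0)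
              + (if k = i + (n : ZMod N) then F k j else 0)) := by
        intro k
        rw [hA k]
        split_ifs <;> ring
      rw [Finset.sum_congr rfl fun k _ => hterm k, Finset.sum_sub_distrib,
        Finset.sum_add_distrib, Finset.sum_add_distrib,
        Finset.sum_ite_eq Finset.univ i, Finset.sum_ite_eq' Finset.univ (i - 1),
        Finset.sum_ite_eq' Finset.univ (i + 1), Finset.sum_ite_eq' Finset.univ (i + (n : ZMod N))]
      simp
    rw [expand]
    have e1 : F (i - 1) j = F i j * f (-j) := by
      show f ((i - 1) * j) = f (i * j) * f (-j)
      rw [← fadd]; congr 1; ring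
    have e2 : F (i + 1) j = F i j * f j := by
      show f ((i + 1) * j) = f (i * j) * f j
      rw [← fadd]; congr 1; ring
    have e3 : F (i + (n : ZMod N)) j = F i j * f ((n : ZMod N) * j) := by
      show f ((i + (n : ZMod N)) * j) = f (i * j) * f ((n : ZMod N) * j)
      rw [← fadd]; congr 1; ring
    rw [e1, e2, e3]
    show _ = F i j * ((x : ℂ) - (f j + f (-j) + f ((n : ZMod N) * j)))
    ring
  -- the equivalence
  set e : Fin N ≃ ZMod N :=
    ⟨fun i => ((i : ℕ) : ZMod N), fun a => ⟨a.val, a.val_lt⟩,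
     fun i => by ext; simp [ZMod.val_natCast, Nat.mod_eq_of_lt i.isLt],
     fun a => by simp [ZMod.natCast_rightInverse a]⟩ with hedef
  have heval : ∀ i : Fin N, (e i).val = (i : ℕ) := fun i => by
    simp [hedef, ZMod.val_natCast, Nat.mod_eq_of_lt i.isLt]
  have hdetF : F.det ≠ 0 := by
    have hFsub : F.submatrix e e = Matrix.vandermonde (fun i : Fin N => ζ ^ (i : ℕ)) := by
      ext i j
      show f (e i * e j) = _
      rw [Matrix.vandermonde_apply]
      show ζ ^ (e i * e j).val = _
      rw [ZMod.val_mul, heval i, heval j, pow_mod_eq hζN, pow_mul]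
    rw [← Matrix.det_submatrix_equiv_self e F, hFsub, Matrix.det_vandermonde]
    refine Finset.prod_ne_zero_iff.mpr fun i _ => Finset.prod_ne_zero_iff.mpr fun j hj =>
      sub_ne_zero_of_ne fun hEq => ?_
    have h2 := hprim.pow_inj j.is_lt i.is_lt hEq
    have h3 : (i : ℕ) < (j : ℕ) := Fin.lt_def.mp (Finset.mem_Ioi.mp hj)
    omega
  have hdetM : M.det = ∏ j : ZMod N, d j := by
    have h := congrArg Matrix.det hMF
    rw [Matrix.det_mul, Matrix.det_mul, Matrix.det_diagonal, mul_comm F.det] at h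
    exact mul_right_cancel₀ hdetF h
  have hd : ∀ j : ZMod N, d j
      = ((x - ((-1 : ℝ) ^ j.val + 2 * Real.cos (j.val * π / n)) : ℝ) : ℂ) := by
    intro j
    have hnC : (n : ℂ) ≠ 0 := Nat.cast_ne_zero.mpr (by omega)
    have hfj : f j = Complex.exp (((j.val * π / n : ℝ) : ℂ) * Complex.I) := by
      show ζ ^ j.val = _
      rw [hζdef, ← Complex.exp_nat_mul]
      congr 1
      push_cast [hNdef]
      field_simp
    have hfnegj : f (-j) = Complex.exp (-((j.val * π / n : ℝ) : ℂ) * Complex.I) := by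
      have h1 : f (-j) * f j = 1 := by rw [← fadd, neg_add_cancel, f0]
      rw [eq_inv_of_mul_eq_one_left h1, hfj, ← Complex.exp_neg]
      congr 1
      ring
    have hfnj : f ((n : ZMod N) * j) = (-1 : ℂ) ^ j.val := by
      show ζ ^ ((n : ZMod N) * j).val = _
      have hvn : ((n : ℕ) : ZMod N).val = n := by
        rw [ZMod.val_natCast, Nat.mod_eq_of_lt (by omega)]
      rw [ZMod.val_mul, hvn, pow_mod_eq hζN, pow_mul]
      congr 1
      rw [hζdef, ← Complex.exp_nat_mul,
        show ((n : ℕ) : ℂ) * (2 * ↑π * Complex.I / ((N : ℕ) : ℂ)) = ↑π * Complex.I by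
          push_cast [hNdef]; field_simp]
      exact Complex.exp_pi_mul_I
    show (x : ℂ) - (f j + f (-j) + f ((n : ZMod N) * j)) = _
    rw [hfj, hfnegj, hfnj, ← Complex.two_cos, ← Complex.ofReal_cos]
    push_cast
    ring
  have hprod : ∏ j : ZMod N, d j
      = ((∏ m ∈ Finset.range N, (x - ((-1 : ℝ) ^ m + 2 * Real.cos (m * π / n))) : ℝ) : ℂ) := by
    have hsteps : ∏ i : Fin N, d (e i) = ∏ i : Fin N,
        ((x - ((-1 : ℝ) ^ (i : ℕ) + 2 * Real.cos ((i : ℕ) * π / n)) : ℝ) : ℂ) :=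
      Finset.prod_congr rfl fun i _ => by rw [hd (e i), heval i]
    rw [← Equiv.prod_comp e d, hsteps, ← Complex.ofReal_prod]
    congr 1
    exact Fin.prod_univ_eq_prod_range
      (fun m => x - ((-1 : ℝ) ^ m + 2 * Real.cos (m * π / n))) N
  have hmap : (Complex.ofRealHom).mapMatrix
      (x • (1 : Matrix (ZMod N) (ZMod N) ℝ) - (mobiusLadder n).adjMatrix ℝ) = M := by
    ext i k
    show (((x • (1 : Matrix (ZMod N) (ZMod N) ℝ) - (mobiusLadder n).adjMatrix ℝ)) i k : ℂ)
        = ((x : ℂ) • (1 : Matrix (ZMod N) (ZMod N) ℂ) - A) i k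
    rw [hAdef]
    simp only [Matrix.sub_apply, Matrix.smul_apply, Matrix.one_apply,
      SimpleGraph.adjMatrix_apply, smul_eq_mul]
    push_cast [apply_ite (Complex.ofReal)]
    rfl
  have hdet2 : (((x • (1 : Matrix (ZMod N) (ZMod N) ℝ) - (mobiusLadder n).adjMatrix ℝ).det : ℝ) : ℂ)
      = M.det := by
    rw [← hmap, ← RingHom.map_det]
    rfl
  have key : (x • (1 : Matrix (ZMod N) (ZMod N) ℝ) - (mobiusLadder n).adjMatrix ℝ).det
      = ∏ m ∈ Finset.range N, (x - ((-1 : ℝ) ^ m + 2 * Real.cos (m * π / n))) := by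
    have h := hdet2.trans (hdetM.trans hprod)
    exact_mod_cast h
  rw [key]
  have h0 : (x - ((-1 : ℝ) ^ (0 : ℕ) + 2 * Real.cos ((0 : ℕ) * π / n)))
      = (x - ((-1 : ℝ) ^ N + 2 * Real.cos ((N : ℕ) * π / n))) := by
    have hc : ((N : ℕ) : ℝ) * π / n = 2 * π := by
      rw [hNdef]; push_cast
      field_simp
    rw [hc, pow_zero, Even.neg_one_pow ⟨n, by omega⟩, Real.cos_two_pi]
    norm_num
  rw [Finset.range_eq_Ico, Finset.prod_eq_prod_Ico_succ_bot (by omega : 0 < N)]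
  rw [show Finset.Icc 1 N = Finset.Ico 1 (N + 1) from (Finset.Ico_add_one_right_eq_Icc ..).symm,
    Finset.prod_Ico_succ_top (by omega : 1 ≤ N), h0]
  ring
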